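/- Let A, B ∈ ℝ^{n×n} be normal matrices whose (complex) spectra are disjoint. Then a real orthogonal matrix M ∈ ℝ^{2n×2n} satisfies M·blockdiag(A, B)·Mᵀ = blockdiag(A, B) if and only if M = blockdiag(M₁, M₂) with M₁ ∈ ig(A) and M₂ ∈ ig(B). Equivalently, ig(blockdiag(A, B)) = blockdiag(ig(A), ig(B)). -/

import Mathlib

open Matrix Polynomial

private lemma aeval_intertwine {n : ℕ} (A B X : Matrix (Fin n) (Fin n) ℂ)
    (hX : A * X = X * B) (p : ℂ[X]) :
    (Polynomial.aeval A) p * X = X * (Polynomial.aeval B) p := by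
  induction p using Polynomial.induction_on with
  | C a => simpa using Algebra.commutes a X
  | add p q hp hq => simp only [map_add, add_mul, mul_add, hp, hq]
  | monomial m a hm =>
      have hA : (Polynomial.aeval A) (Polynomial.C a * Polynomial.X ^ (m + 1))
          = (Polynomial.aeval A) (Polynomial.C a * Polynomial.X ^ m) * A := by
        simp [pow_succ, mul_assoc]
      have hBp : (Polynomial.aeval B) (Polynomial.C a * Polynomial.X ^ (m + 1))
          = (Polynomial.aeval B) (Polynomial.C a * Polynomial.X ^ m) * B := by
        simp [pow_succ, mul_assoc]
      rw [hA, hBp, mul_assoc, hX, ← mul_assoc, hm, mul_assoc]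

private lemma root_charpoly_mem_spectrum {n : ℕ} (B : Matrix (Fin n) (Fin n) ℂ) (μ : ℂ)
    (h : Polynomial.eval μ B.charpoly = 0) : μ ∈ spectrum ℂ B := by
  rw [spectrum.mem_iff, Matrix.isUnit_iff_isUnit_det, isUnit_iff_ne_zero, not_not]
  have : Polynomial.eval μ B.charpoly
      = ((charmatrix B).map (Polynomial.evalRingHom μ)).det :=
    (Polynomial.evalRingHom μ).map_det (charmatrix B)
  rw [this] at h
  rw [← h]
  congr 1
  ext i j
  by_cases hij : i = j <;>
    simp [hij, charmatrix_apply_eq, charmatrix_apply_ne, Matrix.algebraMap_matrix_apply,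
      Matrix.sub_apply]

private lemma sylvester_zero {n : ℕ} (A B X : Matrix (Fin n) (Fin n) ℂ)
    (hdisj : Disjoint (spectrum ℂ A) (spectrum ℂ B))
    (hX : A * X = X * B) : X = 0 := by
  rcases Nat.eq_zero_or_pos n with hn | hn
  · subst hn
    ext i j
    exact absurd i.2 (by simp)
  set p := B.charpoly with hp
  have h1 : (Polynomial.aeval A) p * X = X * (Polynomial.aeval B) p :=
    aeval_intertwine A B X hX p
  rw [Matrix.aeval_self_charpoly, mul_zero] at h1
  have hdeg : 0 < p.degree := by
    have hmon : p.Monic := B.charpoly_monic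
    rw [Polynomial.degree_eq_natDegree hmon.ne_zero, Matrix.charpoly_natDegree_eq_dim]
    exact_mod_cast by simpa using hn
  have hu : IsUnit ((Polynomial.aeval A) p) := by
    by_contra hnu
    have h0 : (0 : ℂ) ∈ spectrum ℂ ((Polynomial.aeval A) p) := by
      rw [spectrum.zero_mem_iff]; exact hnu
    rw [spectrum.map_polynomial_aeval_of_degree_pos A p hdeg] at h0
    obtain ⟨μ, hμA, hμ0⟩ := h0
    have hμB : μ ∈ spectrum ℂ B := root_charpoly_mem_spectrum B μ hμ0
    exact Set.disjoint_left.mp hdisj hμA hμB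
  exact (IsUnit.mul_right_eq_zero hu).mp h1

private lemma map_eq_zero_of_complex {n : ℕ} (X : Matrix (Fin n) (Fin n) ℝ)
    (h : X.map (Complex.ofReal : ℝ → ℂ) = 0) : X = 0 := by
  ext i j
  have := congrFun (congrFun h i) j
  simpa [Matrix.map_apply, Complex.ofReal_eq_zero] using this

/-- The invariance group of a block-diagonal matrix built from two real normal matrices with
disjoint complex spectra is the block-diagonal product of the two invariance groups: a real
orthogonal `M` satisfies `M·blockdiag(A, B)·Mᵀ = blockdiag(A, B)` iff `M = blockdiag(M₁, M₂)`
with `M₁ ∈ ig(A)` and `M₂ ∈ ig(B)`. -/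
theorem ig_blockdiag_of_disjoint_spectra (n : ℕ) (A B : Matrix (Fin n) (Fin n) ℝ)
    (hA : A * Aᵀ = Aᵀ * A) (hB : B * Bᵀ = Bᵀ * B)
    (hdisj : Disjoint (spectrum ℂ (A.map (Complex.ofReal : ℝ → ℂ)))
      (spectrum ℂ (B.map (Complex.ofReal : ℝ → ℂ))))
    (M : Matrix (Fin n ⊕ Fin n) (Fin n ⊕ Fin n) ℝ) (hM : Mᵀ * M = 1) :
    M * Matrix.fromBlocks A 0 0 B * Mᵀ = Matrix.fromBlocks A 0 0 B ↔
      ∃ (M₁ M₂ : Matrix (Fin n) (Fin n) ℝ),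
        M₁ᵀ * M₁ = 1 ∧ M₂ᵀ * M₂ = 1 ∧
        M₁ * A * M₁ᵀ = A ∧ M₂ * B * M₂ᵀ = B ∧
        M = Matrix.fromBlocks M₁ 0 0 M₂ := by
  constructor
  · intro h
    have hMMt : M * Mᵀ = 1 := mul_eq_one_comm.mp hM
    have hcomm : M * Matrix.fromBlocks A 0 0 B = Matrix.fromBlocks A 0 0 B * M := by
      have := congrArg (· * M) h
      simpa [mul_assoc, hM] using this
    set P := M.toBlocks₁₁ with hP
    set Q := M.toBlocks₁₂ with hQ
    set R := M.toBlocks₂₁ with hR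
    set S := M.toBlocks₂₂ with hS
    have hMb : M = Matrix.fromBlocks P Q R S := (Matrix.fromBlocks_toBlocks M).symm
    rw [hMb, Matrix.fromBlocks_multiply, Matrix.fromBlocks_multiply] at hcomm
    simp only [Matrix.mul_zero, Matrix.zero_mul, add_zero, zero_add] at hcomm
    have h11 : P * A = A * P := congrArg Matrix.toBlocks₁₁ hcomm
    have h12 : Q * B = A * Q := congrArg Matrix.toBlocks₁₂ hcomm
    have h21 : R * A = B * R := congrArg Matrix.toBlocks₂₁ hcomm
    have h22 : S * B = B * S := congrArg Matrix.toBlocks₂₂ hcomm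
    -- kill off-diagonal blocks via Sylvester
    have hQ0 : Q = 0 := by
      apply map_eq_zero_of_complex
      apply sylvester_zero (A.map (Complex.ofReal : ℝ → ℂ))
        (B.map (Complex.ofReal : ℝ → ℂ)) _ hdisj
      have := congrArg (fun N : Matrix (Fin n) (Fin n) ℝ =>
        N.map (Complex.ofRealHom : ℝ →+* ℂ)) h12.symm
      rw [Matrix.map_mul, Matrix.map_mul] at this
      exact this
    have hR0 : R = 0 := by
      apply map_eq_zero_of_complex
      apply sylvester_zero (B.map (Complex.ofReal : ℝ → ℂ))
        (A.map (Complex.ofReal : ℝ → ℂ)) _ hdisj.symm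
      have := congrArg (fun N : Matrix (Fin n) (Fin n) ℝ =>
        N.map (Complex.ofRealHom : ℝ →+* ℂ)) h21.symm
      rw [Matrix.map_mul, Matrix.map_mul] at this
      exact this
    rw [hQ0, hR0] at hMb
    -- orthogonality of blocks
    have hortho : Matrix.fromBlocks (Pᵀ * P) 0 0 (Sᵀ * S)
        = Matrix.fromBlocks (1 : Matrix (Fin n) (Fin n) ℝ) 0 0 1 := by
      have := hM
      rw [hMb, Matrix.fromBlocks_transpose, Matrix.fromBlocks_multiply] at this
      simpa [Matrix.fromBlocks_one] using this
    have hPtP : Pᵀ * P = 1 := congrArg Matrix.toBlocks₁₁ hortho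
    have hStS : Sᵀ * S = 1 := congrArg Matrix.toBlocks₂₂ hortho
    have hPPt : P * Pᵀ = 1 := mul_eq_one_comm.mp hPtP
    have hSSt : S * Sᵀ = 1 := mul_eq_one_comm.mp hStS
    refine ⟨P, S, hPtP, hStS, ?_, ?_, hMb⟩
    · rw [h11, mul_assoc, hPPt, mul_one]
    · rw [h22, mul_assoc, hSSt, mul_one]
  · rintro ⟨M₁, M₂, h1, h2, h3, h4, rfl⟩
    rw [Matrix.fromBlocks_transpose, Matrix.fromBlocks_multiply, Matrix.fromBlocks_multiply]
    simp [h3, h4]
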